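/- Fix an integer N ≥ 2. Then the Lebesgue measure restricted to [0,1) is the unique Borel probability measure μ on [0,1) satisfying the strong invariance identity (1/N) ∫_{[0,1)} Σ_{k=0}^{N-1} f((x+k)/N) dμ(x) = ∫_{[0,1)} f dμ for every bounded measurable f : [0,1) → ℂ. -/

import Mathlib

open MeasureTheory
open Set

/-- The `k`-th inverse branch `x ↦ (x + k)/N` of `x ↦ N·x mod 1` on `[0,1)`
(for `k < N` the value `(x+k)/N` already lies in `[0,1)`, so taking the fractional
part does not change it). -/
noncomputable def branchMap (N k : ℕ) (x : Set.Ico (0:ℝ) 1) : Set.Ico (0:ℝ) 1 :=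
  ⟨Int.fract (((x : ℝ) + k) / N), Int.fract_nonneg _, Int.fract_lt_one _⟩

/-- Lebesgue measure restricted to `[0,1)`, as a Borel measure on `[0,1)`. -/
noncomputable def lebesgueIco : Measure (Set.Ico (0:ℝ) 1) :=
  Measure.comap Subtype.val volume



lemma mem_Ico_branch {N k : ℕ} (hk : k < N) {x : ℝ}
    (hx : x ∈ Set.Ico (0:ℝ) 1) : (x + k) / N ∈ Set.Ico (0:ℝ) 1 := by
  have hN' : (0:ℝ) < N := by exact_mod_cast Nat.zero_lt_of_lt hk
  constructor
  · exact div_nonneg (add_nonneg hx.1 (Nat.cast_nonneg _)) hN'.le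
  · rw [div_lt_one hN']
    have : (k:ℝ) + 1 ≤ N := by exact_mod_cast hk
    linarith [hx.2]

lemma sum_indicator_branch {N : ℕ} (hN : 2 ≤ N) (n j : ℕ) (hj : j < N^(n+1)) {x : ℝ}
    (hx : x ∈ Set.Ico (0:ℝ) 1) :
    ∑ k ∈ Finset.range N,
        (Set.Ico ((j:ℝ)/(N:ℝ)^(n+1)) (((j:ℝ)+1)/(N:ℝ)^(n+1))).indicator
          (fun _ => (1:ℂ)) ((x + k)/N)
      = (Set.Ico (((j % N^n : ℕ):ℝ)/(N:ℝ)^n) ((((j % N^n : ℕ):ℝ)+1)/(N:ℝ)^n)).indicator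
          (fun _ => (1:ℂ)) x := by
  have hN0 : (0:ℝ) < N := by positivity
  have hNn : (0:ℝ) < (N:ℝ)^n := by positivity
  set k₀ := j / N^n with hk₀
  set s := j % N^n with hs
  have hsn : s < N^n := Nat.mod_lt _ (by positivity)
  have hk₀N : k₀ < N := by
    rw [hk₀, Nat.div_lt_iff_lt_mul (Nat.pow_pos (by omega))]
    calc j < N^(n+1) := hj
    _ = N * N^n := by ring
  have hjeq : (j:ℝ) = (N:ℝ)^n * k₀ + s := by
    have := Nat.div_add_mod j (N^n)
    rw [hk₀, hs]; exact_mod_cast this.symm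
  have je : (j:ℝ)/(N:ℝ)^n = (k₀:ℝ) + (s:ℝ)/(N:ℝ)^n := by
    rw [hjeq]; field_simp
  have je1 : ((j:ℝ)+1)/(N:ℝ)^n = (k₀:ℝ) + ((s:ℝ)+1)/(N:ℝ)^n := by
    rw [hjeq]; field_simp; ring
  have hjl : (j:ℝ)/(N:ℝ)^(n+1) = ((j:ℝ)/(N:ℝ)^n)/N := by
    rw [div_div, ← pow_succ]
  have hjr : ((j:ℝ)+1)/(N:ℝ)^(n+1) = (((j:ℝ)+1)/(N:ℝ)^n)/N := by
    rw [div_div, ← pow_succ]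
  have hmem : ∀ k : ℕ, ((x + k)/N ∈ Set.Ico ((j:ℝ)/(N:ℝ)^(n+1)) (((j:ℝ)+1)/(N:ℝ)^(n+1)))
      ↔ ((k₀:ℝ) + (s:ℝ)/(N:ℝ)^n ≤ x + k ∧ x + k < (k₀:ℝ) + ((s:ℝ)+1)/(N:ℝ)^n) := by
    intro k
    rw [Set.mem_Ico, hjl, hjr, div_le_div_iff_of_pos_right hN0, div_lt_div_iff_of_pos_right hN0,
      je, je1]
  have hssn : ((s:ℝ)+1)/(N:ℝ)^n ≤ 1 := by
    rw [div_le_one hNn]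
    exact_mod_cast Nat.succ_le_of_lt hsn
  have hs0 : (0:ℝ) ≤ (s:ℝ)/(N:ℝ)^n := by positivity
  rw [Finset.sum_eq_single_of_mem k₀ (Finset.mem_range.mpr hk₀N)]
  · have hiff : ((x + (k₀:ℝ))/N ∈ Set.Ico ((j:ℝ)/(N:ℝ)^(n+1)) (((j:ℝ)+1)/(N:ℝ)^(n+1)))
        ↔ x ∈ Set.Ico ((s:ℝ)/(N:ℝ)^n) (((s:ℝ)+1)/(N:ℝ)^n) := by
      rw [hmem k₀, Set.mem_Ico]
      constructor
      · rintro ⟨h1, h2⟩; exact ⟨by linarith, by linarith⟩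
      · rintro ⟨h1, h2⟩; exact ⟨by linarith, by linarith⟩
    rw [Set.indicator_apply, Set.indicator_apply]
    exact if_congr hiff rfl rfl
  · intro k hk hkne
    rw [Set.indicator_apply_eq_zero]
    intro hmemk
    rw [hmem k] at hmemk
    rcases lt_or_gt_of_ne hkne with h | h
    · -- k < k₀ : lower bound fails
      have hk1 : (k:ℝ) + 1 ≤ (k₀:ℝ) := by exact_mod_cast h
      have := hmemk.1
      linarith [hx.2]
    · have hk1 : (k₀:ℝ) + 1 ≤ (k:ℝ) := by exact_mod_cast h
      have := hmemk.2
      linarith [hx.1]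


lemma map_branch_volume {N k : ℕ} (hN : 0 < N) :
    Measure.map (fun x : ℝ => (x + k)/N) volume = ENNReal.ofReal N • volume := by
  have hNne : ((N:ℝ)) ≠ 0 := Nat.cast_ne_zero.mpr (by omega)
  have hfun : (fun x : ℝ => (x + k)/N) = (fun y : ℝ => y + (k:ℝ)/N) ∘ (fun x : ℝ => (N:ℝ)⁻¹ * x) := by
    funext x; simp only [Function.comp_apply]; ring
  rw [hfun, ← Measure.map_map (by fun_prop) (by fun_prop),
    Real.map_volume_mul_left (inv_ne_zero hNne), Measure.map_smul,
    map_add_right_eq_self volume ((k:ℝ)/N)]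
  congr 1
  rw [inv_inv, abs_of_nonneg (by positivity)]

lemma integrable_of_bdd {𝕜 : Type*} [NormedAddCommGroup 𝕜] {μ : Measure ℝ} [IsFiniteMeasure μ]
    {g : ℝ → 𝕜} (hg : AEStronglyMeasurable g μ) {C : ℝ} (hC : ∀ x, ‖g x‖ ≤ C) :
    Integrable g μ :=
  Integrable.mono' (integrable_const C) hg (Filter.Eventually.of_forall hC)

lemma integral_branch_term {N k : ℕ} (hN : 0 < N) (hk : k < N) {g : ℝ → ℂ}
    (hg : Measurable g) :
    ∫ x in Set.Ico (0:ℝ) 1, g ((x + k)/N)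
      = (N:ℝ) • ∫ y in Set.Ico ((k:ℝ)/N) (((k:ℝ)+1)/N), g y := by
  have hN0 : (0:ℝ) < N := by exact_mod_cast hN
  have hT : Measurable (fun x : ℝ => (x + k)/N) := by fun_prop
  have hpre : (fun x : ℝ => (x + k)/N) ⁻¹' (Set.Ico ((k:ℝ)/N) (((k:ℝ)+1)/N))
      = Set.Ico (0:ℝ) 1 := by
    ext x
    simp only [Set.mem_preimage, Set.mem_Ico]
    rw [div_le_div_iff_of_pos_right hN0, div_lt_div_iff_of_pos_right hN0]
    constructor
    · rintro ⟨h1, h2⟩; exact ⟨by linarith, by linarith⟩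
    · rintro ⟨h1, h2⟩; exact ⟨by linarith, by linarith⟩
  have h1 : ∫ y in Set.Ico ((k:ℝ)/N) (((k:ℝ)+1)/N), g y
        ∂(Measure.map (fun x : ℝ => (x + k)/N) volume)
      = ∫ x in Set.Ico (0:ℝ) 1, g ((x + k)/N) := by
    rw [Measure.restrict_map hT measurableSet_Ico, hpre,
      integral_map hT.aemeasurable hg.aestronglyMeasurable]
  rw [← h1, map_branch_volume hN, Measure.restrict_smul, integral_smul_measure,
    ENNReal.toReal_ofReal hN0.le]

lemma iUnion_Ico_div (N : ℕ) (hN : 0 < N) :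
    (⋃ k ∈ Finset.range N, Set.Ico ((k:ℝ)/N) (((k:ℝ)+1)/N)) = Set.Ico (0:ℝ) 1 := by
  have hN0 : (0:ℝ) < N := by exact_mod_cast hN
  ext x
  simp only [Set.mem_iUnion, Finset.mem_range, Set.mem_Ico, exists_prop]
  constructor
  · rintro ⟨k, hk, h1, h2⟩
    have hk' : (k:ℝ) + 1 ≤ N := by exact_mod_cast hk
    exact ⟨le_trans (by positivity) h1, by
      calc x < ((k:ℝ)+1)/N := h2
        _ ≤ 1 := by rw [div_le_one hN0]; exact hk'⟩
  · rintro ⟨h1, h2⟩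
    refine ⟨⌊x * N⌋₊, ?_, ?_, ?_⟩
    · rw [Nat.floor_lt (by positivity)]
      calc x * N < 1 * N := mul_lt_mul_of_pos_right h2 hN0
        _ = N := one_mul _
    · rw [div_le_iff₀ hN0]
      exact Nat.floor_le (by positivity)
    · rw [lt_div_iff₀ hN0]
      exact Nat.lt_floor_add_one _

lemma exist_core {N : ℕ} (hN : 2 ≤ N) {g : ℝ → ℂ} (hg : Measurable g)
    {C : ℝ} (hC : ∀ x, ‖g x‖ ≤ C) :
    (N:ℂ)⁻¹ * ∫ x in Set.Ico (0:ℝ) 1, ∑ k ∈ Finset.range N, g ((x + k)/N)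
      = ∫ x in Set.Ico (0:ℝ) 1, g x := by
  have hNpos : 0 < N := by omega
  have hN0 : (0:ℝ) < N := by exact_mod_cast hNpos
  haveI : IsFiniteMeasure (volume.restrict (Set.Ico (0:ℝ) 1)) :=
    ⟨by rw [Measure.restrict_apply_univ]; simp [Real.volume_Ico]⟩
  have hint : ∀ k : ℕ, Integrable (fun x => g ((x + k)/N)) (volume.restrict (Set.Ico (0:ℝ) 1)) := by
    intro k
    exact integrable_of_bdd ((hg.comp (by fun_prop)).aestronglyMeasurable) (fun x => hC _)
  rw [integral_finset_sum _ (fun k _ => hint k)]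
  have hterm : ∀ k ∈ Finset.range N,
      ∫ x in Set.Ico (0:ℝ) 1, g ((x + k)/N)
        = (N:ℝ) • ∫ y in Set.Ico ((k:ℝ)/N) (((k:ℝ)+1)/N), g y := fun k hk =>
    integral_branch_term hNpos (Finset.mem_range.mp hk) hg
  rw [Finset.sum_congr rfl hterm, ← Finset.smul_sum]
  have hdisj : (Finset.range N : Set ℕ).Pairwise
      (Function.onFun Disjoint fun k : ℕ => Set.Ico ((k:ℝ)/N) (((k:ℝ)+1)/N)) := by
    intro i _ j _ hij
    rw [Function.onFun, Set.Ico_disjoint_Ico]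
    rcases lt_or_gt_of_ne hij with h | h
    · have h' : (i:ℝ) + 1 ≤ j := by exact_mod_cast h
      calc min (((i:ℝ)+1)/N) (((j:ℝ)+1)/N) ≤ ((i:ℝ)+1)/N := min_le_left _ _
        _ ≤ (j:ℝ)/N := by gcongr
        _ ≤ max ((i:ℝ)/N) ((j:ℝ)/N) := le_max_right _ _
    · have h' : (j:ℝ) + 1 ≤ i := by exact_mod_cast h
      calc min (((i:ℝ)+1)/N) (((j:ℝ)+1)/N) ≤ ((j:ℝ)+1)/N := min_le_right _ _
        _ ≤ (i:ℝ)/N := by gcongr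
        _ ≤ max ((i:ℝ)/N) ((j:ℝ)/N) := le_max_left _ _
  have hIOn : ∀ k ∈ Finset.range N,
      IntegrableOn g (Set.Ico ((k:ℝ)/N) (((k:ℝ)+1)/N)) volume := by
    intro k _
    haveI : IsFiniteMeasure (volume.restrict (Set.Ico ((k:ℝ)/N) (((k:ℝ)+1)/N))) :=
      ⟨by rw [Measure.restrict_apply_univ]; simp [Real.volume_Ico]⟩
    exact integrable_of_bdd hg.aestronglyMeasurable hC
  rw [← integral_biUnion_finset (Finset.range N) (fun k _ => measurableSet_Ico) hdisj hIOn,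
    iUnion_Ico_div N hNpos, Complex.real_smul, ← mul_assoc]
  have : (N:ℂ)⁻¹ * ((N:ℝ):ℂ) = 1 := by
    push_cast
    field_simp
    exact div_self (by exact_mod_cast hN0.ne')
  rw [this, one_mul]



lemma unique_core {N : ℕ} (hN : 2 ≤ N) (ν : Measure ℝ) [IsProbabilityMeasure ν]
    (hν0 : ν (Set.Ico (0:ℝ) 1)ᶜ = 0)
    (hinv : ∀ g : ℝ → ℂ, Measurable g → (∃ C, ∀ x, ‖g x‖ ≤ C) →
      (N:ℂ)⁻¹ * ∫ x, ∑ k ∈ Finset.range N, g ((x + k)/N) ∂ν = ∫ x, g x ∂ν) :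
    ν = volume.restrict (Set.Ico 0 1) := by
  have hN0 : (0:ℝ) < N := by positivity
  have hNne : (N:ℝ) ≠ 0 := hN0.ne'
  have hae : ∀ᵐ x ∂ν, x ∈ Set.Ico (0:ℝ) 1 := ae_iff.mpr hν0
  -- Step 1: measures of N-adic intervals
  have hIval : ∀ n : ℕ, ∀ j : ℕ, j < N^n →
      (ν (Set.Ico ((j:ℝ)/(N:ℝ)^n) (((j:ℝ)+1)/(N:ℝ)^n))).toReal = ((N:ℝ)⁻¹)^n := by
    intro n
    induction n with
    | zero =>
      intro j hj
      have hj0 : j = 0 := by simpa using hj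
      subst hj0
      have h1 : ν (Set.Ico (0:ℝ) 1) = 1 := by
        have := measure_add_measure_compl (μ := ν) (measurableSet_Ico :
          MeasurableSet (Set.Ico (0:ℝ) 1))
        rw [hν0, add_zero, measure_univ] at this
        exact this
      norm_num [h1]
    | succ n ih =>
      intro j hj
      set s := j % N^n with hs
      have hsn : s < N^n := Nat.mod_lt _ (by positivity)
      set g : ℝ → ℂ :=
        (Set.Ico ((j:ℝ)/(N:ℝ)^(n+1)) (((j:ℝ)+1)/(N:ℝ)^(n+1))).indicator (fun _ => (1:ℂ)) with hg
      have hgm : Measurable g := measurable_const.indicator measurableSet_Ico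
      have hgb : ∀ x, ‖g x‖ ≤ 1 := by
        intro x
        rw [hg, Set.indicator_apply]
        split_ifs <;> simp
      have key := hinv g hgm ⟨1, hgb⟩
      have hLHS : ∫ x, ∑ k ∈ Finset.range N, g ((x + k)/N) ∂ν
          = (ν (Set.Ico (((s:ℕ):ℝ)/(N:ℝ)^n) ((((s:ℕ):ℝ)+1)/(N:ℝ)^n))).toReal := by
        rw [integral_congr_ae (hae.mono fun x hx => sum_indicator_branch hN n j hj hx)]
        rw [integral_indicator_const _ measurableSet_Ico]
        simp
        rfl
      have hRHS : ∫ x, g x ∂ν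
          = (ν (Set.Ico ((j:ℝ)/(N:ℝ)^(n+1)) (((j:ℝ)+1)/(N:ℝ)^(n+1)))).toReal := by
        rw [hg, integral_indicator_const _ measurableSet_Ico]
        simp
        rfl
      rw [hLHS, hRHS, ih s hsn] at key
      have : ((ν (Set.Ico ((j:ℝ)/(N:ℝ)^(n+1)) (((j:ℝ)+1)/(N:ℝ)^(n+1)))).toReal : ℂ)
          = ((((N:ℝ)⁻¹)^(n+1) : ℝ) : ℂ) := by
        rw [← key]
        push_cast
        ring
      exact_mod_cast this
  -- Step 2: cumulative
  have hcum : ∀ n : ℕ, ∀ j : ℕ, j ≤ N^n →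
      (ν (Set.Ico (0:ℝ) ((j:ℝ)/(N:ℝ)^n))).toReal = (j:ℝ)/(N:ℝ)^n := by
    intro n j
    induction j with
    | zero => intro _; simp
    | succ j ih =>
      intro hj
      have hj' : j < N^n := hj
      have hNn : (0:ℝ) < (N:ℝ)^n := by positivity
      have h0j : (0:ℝ) ≤ (j:ℝ)/(N:ℝ)^n := by positivity
      have hjj1 : (j:ℝ)/(N:ℝ)^n ≤ ((j:ℝ)+1)/(N:ℝ)^n := by gcongr; linarith
      have hsplit : Set.Ico (0:ℝ) (((j:ℝ)+1)/(N:ℝ)^n)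
          = Set.Ico (0:ℝ) ((j:ℝ)/(N:ℝ)^n) ∪ Set.Ico ((j:ℝ)/(N:ℝ)^n) (((j:ℝ)+1)/(N:ℝ)^n) :=
        (Set.Ico_union_Ico_eq_Ico h0j hjj1).symm
      have hdis : Disjoint (Set.Ico (0:ℝ) ((j:ℝ)/(N:ℝ)^n))
          (Set.Ico ((j:ℝ)/(N:ℝ)^n) (((j:ℝ)+1)/(N:ℝ)^n)) :=
        Set.Ico_disjoint_Ico.mpr (le_trans (min_le_left _ _) (le_max_right _ _))
      push_cast
      rw [hsplit, measure_union hdis measurableSet_Ico,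
        ENNReal.toReal_add (measure_ne_top ν _) (measure_ne_top ν _),
        ih hj'.le, hIval n j hj']
      field_simp
      rw [one_div, inv_pow, mul_inv_cancel₀ (pow_ne_zero _ hNne)]
  -- Step 3: cumulative distribution is the identity on [0,1]
  have hIco0 : ∀ t : ℝ, 0 ≤ t → t ≤ 1 → (ν (Set.Ico (0:ℝ) t)).toReal = t := by
    intro t ht0 ht1
    set m := (ν (Set.Ico (0:ℝ) t)).toReal with hm
    have hkey : ∀ n : ℕ, |m - t| ≤ ((N:ℝ)⁻¹)^n := by
      intro n
      have hNn : (0:ℝ) < (N:ℝ)^n := by positivity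
      set j := ⌊t * (N:ℝ)^n⌋₊ with hjdef
      have hj1 : (j:ℝ) ≤ t * (N:ℝ)^n := Nat.floor_le (by positivity)
      have hj2 : t * (N:ℝ)^n < (j:ℝ) + 1 := Nat.lt_floor_add_one _
      have hjN : j ≤ N^n := by
        have : (j:ℝ) ≤ (N:ℝ)^n := le_trans hj1 (by nlinarith)
        exact_mod_cast this
      have htlow : (j:ℝ)/(N:ℝ)^n ≤ t := by rw [div_le_iff₀ hNn]; exact hj1
      have htup : t ≤ ((j:ℝ)+1)/(N:ℝ)^n := by rw [le_div_iff₀ hNn]; exact hj2.le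
      have hlow : (j:ℝ)/(N:ℝ)^n ≤ m := by
        rw [hm, ← hcum n j hjN]
        exact ENNReal.toReal_mono (measure_ne_top ν _)
          (measure_mono (Set.Ico_subset_Ico_right htlow))
      set j' := min (j+1) (N^n) with hj'def
      have hj'N : j' ≤ N^n := min_le_right _ _
      have hj'c : ((j':ℕ):ℝ) = min ((j:ℝ)+1) ((N:ℝ)^n) := by
        rw [hj'def]
        push_cast [Nat.cast_min]
        norm_num
      have htj' : t ≤ (j':ℝ)/(N:ℝ)^n := by
        rw [le_div_iff₀ hNn, hj'c, le_min_iff]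
        exact ⟨hj2.le, by nlinarith⟩
      have hup : m ≤ ((j:ℝ)+1)/(N:ℝ)^n := by
        have h1 : m ≤ (j':ℝ)/(N:ℝ)^n := by
          rw [hm, ← hcum n j' hj'N]
          exact ENNReal.toReal_mono (measure_ne_top ν _)
            (measure_mono (Set.Ico_subset_Ico_right htj'))
        refine le_trans h1 ?_
        gcongr
        rw [hj'c]
        exact min_le_left _ _
      have hdiff : ((j:ℝ)+1)/(N:ℝ)^n = (j:ℝ)/(N:ℝ)^n + ((N:ℝ)⁻¹)^n := by
        rw [inv_pow]
        field_simp
      rw [abs_le]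
      constructor <;> [linarith [hup, htlow]; linarith [hlow, htup]]
    by_contra hne
    have hpos : 0 < |m - t| := abs_pos.mpr (sub_ne_zero.mpr hne)
    have hNinv : (N:ℝ)⁻¹ < 1 := by
      rw [inv_lt_one_iff₀]
      right
      exact_mod_cast by omega
    obtain ⟨n, hn⟩ := exists_pow_lt_of_lt_one hpos hNinv
    exact absurd (hkey n) (by linarith)
  -- Step 4: measures of subintervals of [0,1]
  have hIcoAB : ∀ a b : ℝ, 0 ≤ a → a ≤ b → b ≤ 1 →
      ν (Set.Ico a b) = ENNReal.ofReal (b - a) := by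
    intro a b ha hab hb1
    have hsum : ν (Set.Ico 0 a) + ν (Set.Ico a b) = ν (Set.Ico 0 b) := by
      rw [← measure_union (Set.Ico_disjoint_Ico.mpr
        (le_trans (min_le_left _ _) (le_max_right _ _))) measurableSet_Ico,
        Set.Ico_union_Ico_eq_Ico ha hab]
    have htr : (ν (Set.Ico a b)).toReal = b - a := by
      have h1 := hIco0 a ha (le_trans hab hb1)
      have h2 := hIco0 b (le_trans ha hab) hb1
      have h3 := congrArg ENNReal.toReal hsum
      rw [ENNReal.toReal_add (measure_ne_top ν _) (measure_ne_top ν _), h1, h2] at h3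
      linarith
    rw [← ENNReal.ofReal_toReal (measure_ne_top ν (Set.Ico a b)), htr]
  -- conclude via extensionality on Ico intervals
  refine MeasureTheory.Measure.ext_of_Ico ν _ (fun a b hab => ?_)
  rw [Measure.restrict_apply measurableSet_Ico]
  rw [← measure_inter_conull (s := Set.Ico a b) hν0, Set.Ico_inter_Ico]
  by_cases hcase : max a 0 < min b 1
  · rw [hIcoAB _ _ (le_max_right _ _) hcase.le (min_le_right _ _), Real.volume_Ico]
  · rw [Set.Ico_eq_empty hcase]
    simp

/-- **Lebesgue measure is the unique strongly invariant probability measure for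
`x ↦ Nx mod 1`.**  Fix an integer `N ≥ 2`.  Lebesgue measure restricted to `[0,1)` is
the unique Borel probability measure `μ` on `[0,1)` satisfying
`(1/N) ∫ Σ_{k=0}^{N-1} f((x+k)/N) dμ(x) = ∫ f dμ` for every bounded measurable
`f : [0,1) → ℂ`. -/
theorem lebesgue_unique_strongly_invariant (N : ℕ) (hN : 2 ≤ N) :
    (IsProbabilityMeasure lebesgueIco ∧
      ∀ f : Set.Ico (0:ℝ) 1 → ℂ, Measurable f → (∃ C, ∀ x, ‖f x‖ ≤ C) →
        (N : ℂ)⁻¹ * ∫ x, ∑ k ∈ Finset.range N, f (branchMap N k x) ∂lebesgueIco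
          = ∫ x, f x ∂lebesgueIco) ∧
    ∀ μ : Measure (Set.Ico (0:ℝ) 1), IsProbabilityMeasure μ →
      (∀ f : Set.Ico (0:ℝ) 1 → ℂ, Measurable f → (∃ C, ∀ x, ‖f x‖ ≤ C) →
        (N : ℂ)⁻¹ * ∫ x, ∑ k ∈ Finset.range N, f (branchMap N k x) ∂μ
          = ∫ x, f x ∂μ) →
      μ = lebesgueIco := by
  have he : MeasurableEmbedding (Subtype.val : Set.Ico (0:ℝ) 1 → ℝ) :=
    MeasurableEmbedding.subtype_coe measurableSet_Ico
  have hbranch : ∀ (f : Set.Ico (0:ℝ) 1 → ℂ) (g : ℝ → ℂ),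
      (∀ x : Set.Ico (0:ℝ) 1, g (x : ℝ) = f x) →
      ∀ x : Set.Ico (0:ℝ) 1, ∀ k ∈ Finset.range N,
        f (branchMap N k x) = g (((x:ℝ) + k)/N) := by
    intro f g hgval x k hk
    have hmem : ((x:ℝ) + k)/N ∈ Set.Ico (0:ℝ) 1 :=
      mem_Ico_branch (Finset.mem_range.mp hk) x.2
    have hb : branchMap N k x = ⟨((x:ℝ) + k)/N, hmem⟩ :=
      Subtype.ext (Int.fract_eq_self.mpr hmem)
    rw [hb]
    exact (hgval ⟨_, hmem⟩).symm
  have hmapleb : Measure.map Subtype.val lebesgueIco = volume.restrict (Set.Ico (0:ℝ) 1) := by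
    rw [lebesgueIco, he.map_comap, Subtype.range_val]
  refine ⟨⟨?_, ?_⟩, ?_⟩
  · -- probability measure
    constructor
    rw [lebesgueIco, he.comap_apply, Set.image_univ, Subtype.range_val, Real.volume_Ico]
    norm_num
  · -- invariance of Lebesgue
    intro f hf ⟨C, hC⟩
    set g : ℝ → ℂ := Function.extend Subtype.val f (fun _ => 0) with hgdef
    have hgval : ∀ x : Set.Ico (0:ℝ) 1, g (x : ℝ) = f x := fun x =>
      Subtype.coe_injective.extend_apply f _ x
    have hgm : Measurable g := he.measurable_extend hf measurable_const
    have hgb : ∀ y, ‖g y‖ ≤ max C 0 := by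
      intro y
      by_cases hy : ∃ x : Set.Ico (0:ℝ) 1, (x:ℝ) = y
      · obtain ⟨x, rfl⟩ := hy
        rw [hgval]
        exact le_max_of_le_left (hC x)
      · rw [hgdef, Function.extend_apply' _ _ _ hy]
        simp
    have h1 : ∫ x, f x ∂lebesgueIco = ∫ y in Set.Ico (0:ℝ) 1, g y := by
      rw [← hmapleb, he.integral_map]
      exact integral_congr_ae (Filter.Eventually.of_forall fun x => (hgval x).symm)
    have h2 : ∫ x, ∑ k ∈ Finset.range N, f (branchMap N k x) ∂lebesgueIco
        = ∫ y in Set.Ico (0:ℝ) 1, ∑ k ∈ Finset.range N, g ((y + k)/N) := by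
      rw [← hmapleb, he.integral_map]
      refine integral_congr_ae (Filter.Eventually.of_forall fun x => ?_)
      exact Finset.sum_congr rfl (hbranch f g hgval x)
    rw [h1, h2]
    exact exist_core hN hgm hgb
  · -- uniqueness
    intro μ hμ hinvf
    set ν : Measure ℝ := Measure.map Subtype.val μ with hν
    haveI : IsProbabilityMeasure ν := Measure.isProbabilityMeasure_map he.measurable.aemeasurable
    have hν0 : ν (Set.Ico (0:ℝ) 1)ᶜ = 0 := by
      rw [hν, Measure.map_apply he.measurable measurableSet_Ico.compl]
      have hempty : (Subtype.val ⁻¹' (Set.Ico (0:ℝ) 1)ᶜ : Set (Set.Ico (0:ℝ) 1)) = ∅ := by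
        ext x
        simpa using x.2
      rw [hempty, measure_empty]
    have hinvν : ∀ g : ℝ → ℂ, Measurable g → (∃ C, ∀ x, ‖g x‖ ≤ C) →
        (N:ℂ)⁻¹ * ∫ x, ∑ k ∈ Finset.range N, g ((x + k)/N) ∂ν = ∫ x, g x ∂ν := by
      intro g hgm ⟨C, hC⟩
      set f : Set.Ico (0:ℝ) 1 → ℂ := fun x => g (x : ℝ) with hfdef
      have hf : Measurable f := hgm.comp measurable_subtype_coe
      have key := hinvf f hf ⟨C, fun x => hC _⟩
      have h1 : ∫ x, f x ∂μ = ∫ y, g y ∂ν := by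
        rw [hν, he.integral_map]
      have h2 : ∫ x, ∑ k ∈ Finset.range N, f (branchMap N k x) ∂μ
          = ∫ y, ∑ k ∈ Finset.range N, g ((y + k)/N) ∂ν := by
        rw [hν, he.integral_map]
        refine integral_congr_ae (Filter.Eventually.of_forall fun x => ?_)
        exact Finset.sum_congr rfl (hbranch f g (fun _ => rfl) x)
      rw [h1, h2] at key
      exact key
    have hνeq : ν = volume.restrict (Set.Ico 0 1) := unique_core hN ν hν0 hinvν
    have h3 : μ = Measure.comap Subtype.val ν := (he.comap_map μ).symm
    rw [h3, hνeq, lebesgueIco]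
    ext s hs
    rw [he.comap_apply, he.comap_apply,
      Measure.restrict_apply (he.measurableSet_image.mpr hs)]
    congr 1
    exact Set.inter_eq_left.mpr (by rintro y ⟨x, -, rfl⟩; exact x.2)
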